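/- Let 1 < q < 2. For every (s,ξ) ∈ ℝ×ℝ^N, the Legendre–Fenchel transform of (1/(2q))F_q satisfies ((1/(2q))F_q)^*(s,ξ) = ((2−q)/2)·(q−1)^{2(q−1)/(2−q)}·(G_q(s,ξ))^{2/(2−q)}. More generally, for every constant C > 0, (C F_q)^*(s,ξ) = C^{−q/(2−q)} F_q^*(s,ξ). -/

import Mathlib

open MeasureTheory Filter Topology Set
open scoped ENNReal NNReal

noncomputable section

abbrev Euc (N : ℕ) := EuclideanSpace ℝ (Fin N)

open Classical in
/-- The function `F_q : ℝ × ℝ^N → [0,+∞]`, with values in `EReal`. -/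
def Fq {N : ℕ} (q : ℝ) (t : ℝ) (x : Euc N) : EReal :=
  if 0 < t then ((‖x‖ ^ 2 * t ^ (2 / q - 2) : ℝ) : EReal)
  else if t = 0 ∧ x = 0 then 0 else ⊤

/-- The Legendre–Fenchel transform of `H : ℝ × ℝ^N → (-∞,+∞]`:
`H^*(s,ξ) = sup_{(t,x)} [s t + ⟨ξ,x⟩ - H(t,x)]`. -/
def legendre {N : ℕ} (H : ℝ → Euc N → EReal) (s : ℝ) (ξ : Euc N) : EReal :=
  ⨆ t : ℝ, ⨆ x : Euc N, (((s * t + (inner ℝ ξ x : ℝ)) : ℝ) : EReal) - H t x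

open Classical in
/-- The function `G_q`, with values in `[0,+∞]`. -/
def Gq {N : ℕ} (q : ℝ) (s : ℝ) (ξ : Euc N) : ℝ≥0∞ :=
  if s < 0 then ENNReal.ofReal (‖ξ‖ ^ q / |s| ^ (q - 1))
  else if s = 0 ∧ ξ = 0 then 0 else ⊤

lemma rpow_concave_le {a t t' : ℝ} (h0 : 0 < a) (h1 : a < 1) (ht : 0 < t) (ht' : 0 < t') :
    t ^ a ≤ t' ^ a + a * (t' ^ (a - 1)) * (t - t') := by
  have key : (t / t') ^ a ≤ 1 + a * (t / t' - 1) := by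
    have := rpow_one_add_le_one_add_mul_self (s := t / t' - 1)
      (by have := div_pos ht ht'; linarith) h0.le h1.le
    simpa using this
  have hpos : (0:ℝ) < t' ^ a := Real.rpow_pos_of_pos ht' _
  have e1 : t ^ a = (t / t') ^ a * t' ^ a := by
    rw [Real.div_rpow ht.le ht'.le, div_mul_cancel₀]
    exact hpos.ne'
  have e2 : t' ^ (a - 1) = t' ^ a / t' := by
    rw [Real.rpow_sub ht', Real.rpow_one]
  rw [e1, e2]
  calc (t/t')^a * t'^a ≤ (1 + a * (t/t' - 1)) * t'^a :=
        mul_le_mul_of_nonneg_right key hpos.le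
    _ = t'^a + a * (t'^a / t') * (t - t') := by field_simp

lemma quad_le {N : ℕ} {B : ℝ} (hB : 0 < B) (ξ x : Euc N) :
    (inner ℝ ξ x : ℝ) - B * ‖x‖ ^ 2 ≤ ‖ξ‖ ^ 2 / (4 * B) := by
  rw [le_div_iff₀ (by positivity)]
  nlinarith [mul_le_mul_of_nonneg_left (real_inner_le_norm ξ x) (by positivity : (0:ℝ) ≤ 4*B),
    sq_nonneg (2*B*‖x‖ - ‖ξ‖)]

lemma quad_eq {N : ℕ} {B : ℝ} (hB : 0 < B) (ξ : Euc N) :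
    (inner ℝ ξ ((1/(2*B)) • ξ) : ℝ) - B * ‖(1/(2*B)) • ξ‖ ^ 2 = ‖ξ‖ ^ 2 / (4 * B) := by
  rw [real_inner_smul_right, real_inner_self_eq_norm_sq, norm_smul, Real.norm_eq_abs,
    abs_of_pos (by positivity), mul_pow]
  field_simp
  ring

lemma iSup_top_of_unbdd {ι : Sort*} {f : ι → EReal} (h : ∀ M : ℝ, ∃ i, (M:EReal) ≤ f i) :
    ⨆ i, f i = ⊤ := by
  rw [iSup_eq_top]
  intro b hb
  rcases EReal.lt_iff_exists_real_btwn.1 hb with ⟨M, hbM, _⟩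
  rcases h M with ⟨i, hi⟩
  exact ⟨i, lt_of_lt_of_le hbM hi⟩

open Classical in
lemma key {N : ℕ} (q : ℝ) (hq1 : 1 < q) (hq2 : q < 2) (C : ℝ) (hC : 0 < C) (s : ℝ) (ξ : Euc N) :
    legendre (fun t x => ((C : ℝ) : EReal) * Fq q t x) s ξ =
      if s < 0 ∨ (s = 0 ∧ ξ = 0) then
        (((2/q - 1) / (2 - 2/q) * (-s) *
          ((‖ξ‖^2/(4*C)) * (2 - 2/q) / (-s)) ^ ((1:ℝ)/(2/q - 1)) : ℝ) : EReal)
      else ⊤ := by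
  classical
  have hq0 : (0:ℝ) < q := by linarith
  have hα0 : (0:ℝ) < 2 - 2/q := by
    have : 2/q < 2 := by rw [div_lt_iff₀ hq0]; nlinarith
    linarith
  have h1α : (0:ℝ) < 2/q - 1 := by
    have : 1 < 2/q := by rw [lt_div_iff₀ hq0]; linarith
    linarith
  set A : ℝ := ‖ξ‖^2/(4*C) with hA
  have hA0 : 0 ≤ A := by positivity
  set T : ℝ → Euc N → EReal := fun t x =>
    (((s * t + (inner ℝ ξ x : ℝ)) : ℝ) : EReal) - ((C : ℝ) : EReal) * Fq q t x with hT
  have hleg : legendre (fun t x => ((C : ℝ) : EReal) * Fq q t x) s ξ = ⨆ t, ⨆ x, T t x := rfl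
  -- pointwise facts
  have fneg : ∀ t : ℝ, t < 0 → ∀ x : Euc N, T t x = ⊥ := by
    intro t ht x
    have hFq : Fq q t x = ⊤ := by
      rw [Fq, if_neg (by linarith), if_neg (by rintro ⟨h, -⟩; rw [h] at ht; exact lt_irrefl 0 ht)]
    rw [hT]; simp only
    rw [hFq, EReal.coe_mul_top_of_pos hC, EReal.sub_top]
  have fzero : T 0 0 = 0 := by
    have hFq : Fq q (0:ℝ) (0 : Euc N) = 0 := by
      rw [Fq, if_neg (lt_irrefl 0), if_pos ⟨rfl, rfl⟩]
    rw [hT]; simp only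
    rw [hFq]
    simp
  have fzero' : ∀ x : Euc N, x ≠ 0 → T 0 x = ⊥ := by
    intro x hx
    have hFq : Fq q (0:ℝ) x = ⊤ := by
      rw [Fq, if_neg (lt_irrefl 0), if_neg (by rintro ⟨-, h⟩; exact hx h)]
    rw [hT]; simp only
    rw [hFq, EReal.coe_mul_top_of_pos hC, EReal.sub_top]
  have fpos : ∀ t : ℝ, 0 < t → ∀ x : Euc N,
      T t x = ((s*t + ((inner ℝ ξ x : ℝ) - (C * t^(2/q-2)) * ‖x‖^2) : ℝ) : EReal) := by
    intro t ht x
    rw [hT]; simp only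
    rw [Fq, if_pos ht, ← EReal.coe_mul, ← EReal.coe_sub, EReal.coe_eq_coe_iff]
    ring
  have hBpos : ∀ t : ℝ, 0 < t → 0 < C * t^(2/q-2) := by
    intro t ht
    have := Real.rpow_pos_of_pos ht (2/q-2)
    positivity
  have hBid : ∀ t : ℝ, 0 < t → ‖ξ‖^2 / (4*(C*t^(2/q-2))) = A * t^(2-2/q) := by
    intro t ht
    have h1 : t ^ ((2:ℝ)-2/q) = (t ^ (2/q-2))⁻¹ := by
      rw [show ((2:ℝ)-2/q) = -(2/q-2) by ring, Real.rpow_neg ht.le]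
    rw [show 4*(C*t^(2/q-2)) = (4*C)*t^(2/q-2) by ring, ← div_div, div_eq_mul_inv, h1, hA]
  have fposle : ∀ t : ℝ, 0 < t → ∀ x : Euc N,
      T t x ≤ ((s*t + A * t^(2-2/q) : ℝ) : EReal) := by
    intro t ht x
    rw [fpos t ht x, EReal.coe_le_coe_iff]
    have h := quad_le (hBpos t ht) ξ x
    rw [hBid t ht] at h
    linarith
  have fposeq : ∀ t : ℝ, 0 < t →
      T t ((1/(2*(C*t^(2/q-2)))) • ξ) = ((s*t + A * t^(2-2/q) : ℝ) : EReal) := by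
    intro t ht
    rw [fpos t ht _, EReal.coe_eq_coe_iff]
    have h := quad_eq (hBpos t ht) ξ
    rw [hBid t ht] at h
    linarith
  rw [hleg]
  rcases lt_trichotomy s 0 with hs | hs | hs
  · -- s < 0
    have hs' : (0:ℝ) < -s := by linarith
    rw [if_pos (Or.inl hs)]
    by_cases hξ : ξ = 0
    · -- value is 0, sup is 0
      have hAz : A = 0 := by rw [hA, hξ]; simp
      have hbase : A * (2 - 2/q) / (-s) = 0 := by rw [hAz]; simp
      rw [hbase, Real.zero_rpow (by positivity : (1:ℝ)/(2/q-1) ≠ 0), mul_zero, EReal.coe_zero]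
      apply le_antisymm
      · apply iSup_le; intro t; apply iSup_le; intro x
        rcases lt_trichotomy t 0 with h | h | h
        · rw [fneg t h x]; exact bot_le
        · subst h
          by_cases hx : x = 0
          · subst hx; rw [fzero]
          · rw [fzero' x hx]; exact bot_le
        · refine (fposle t h x).trans ?_
          rw [hAz]
          exact EReal.coe_le_coe_iff.2 (by nlinarith [mul_pos hs' h])
      · exact le_iSup_of_le 0 (le_iSup_of_le 0 fzero.ge)
    · -- A > 0 : the interesting case
      have hn : (0:ℝ) < ‖ξ‖ := norm_pos_iff.2 hξ
      have hApos : 0 < A := by rw [hA]; positivity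
      have hbasepos : 0 < A * (2-2/q) / (-s) := div_pos (mul_pos hApos hα0) hs'
      set ts : ℝ := (A * (2-2/q) / (-s)) ^ ((1:ℝ)/(2/q-1)) with hts
      have htpos : 0 < ts := Real.rpow_pos_of_pos hbasepos _
      have hstar : ts ^ ((2-2/q) - 1) = (A*(2-2/q)/(-s))⁻¹ := by
        rw [hts, ← Real.rpow_mul hbasepos.le,
          show (1/(2/q-1)) * ((2-2/q)-1) = (-1 : ℝ) by
            rw [show ((2-2/q)-1 : ℝ) = -(2/q-1) by ring, one_div, mul_neg,
              inv_mul_cancel₀ h1α.ne']]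
        exact Real.rpow_neg_one _
      have hgrad : A*(2-2/q) * ts ^ ((2-2/q)-1) = -s := by
        have hd : (0:ℝ) < A * (2-2/q) := mul_pos hApos hα0
        rw [hstar, inv_div, mul_div_assoc', mul_comm, mul_div_assoc, div_self hd.ne', mul_one]
      set M : ℝ := (2/q-1)/(2-2/q) * (-s) * ts with hM
      have h3 : A * ts ^ ((2-2/q)-1) = -s/(2-2/q) := by
        rw [eq_div_iff hα0.ne']
        linear_combination hgrad
      have hAts : A * ts ^ (2-2/q) = (-s/(2-2/q)) * ts := by
        rw [show (2-2/q:ℝ) = ((2-2/q)-1) + 1 by ring, Real.rpow_add htpos, Real.rpow_one,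
          ← mul_assoc, h3]
        ring_nf
      have hMeq : M = A * ts ^ (2-2/q) + s * ts := by
        rw [hM, hAts, show (2/q-1 : ℝ) = 1 - (2-2/q) by ring, sub_div, div_self hα0.ne']
        ring
      have hub : ∀ t : ℝ, 0 < t → s*t + A * t^(2-2/q) ≤ M := by
        intro t ht
        have hcon := rpow_concave_le hα0 (by linarith : 2-2/q < 1) ht htpos
        have h4 := mul_le_mul_of_nonneg_left hcon hA0
        have h5 : A * t^(2-2/q) ≤ A * ts^(2-2/q) + (-s) * (t - ts) := by
          calc A * t^(2-2/q) ≤ A*(ts^(2-2/q) + (2-2/q) * ts^((2-2/q)-1) * (t-ts)) := h4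
            _ = A*ts^(2-2/q) + (A*(2-2/q)* ts^((2-2/q)-1))*(t-ts) := by ring
            _ = A*ts^(2-2/q) + (-s)*(t-ts) := by rw [hgrad]
        rw [hMeq]; linarith
      have hM0 : 0 ≤ M := by
        rw [hM]
        exact mul_nonneg (mul_nonneg (div_nonneg h1α.le hα0.le) hs'.le) htpos.le
      apply le_antisymm
      · apply iSup_le; intro t; apply iSup_le; intro x
        rcases lt_trichotomy t 0 with h | h | h
        · rw [fneg t h x]; exact bot_le
        · subst h
          by_cases hx : x = 0
          · subst hx; rw [fzero]; exact EReal.coe_nonneg.2 hM0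
          · rw [fzero' x hx]; exact bot_le
        · exact (fposle t h x).trans (EReal.coe_le_coe_iff.2 (hub t h))
      · refine le_iSup_of_le ts (le_iSup_of_le ((1/(2*(C*ts^(2/q-2)))) • ξ) ?_)
        rw [fposeq ts htpos, EReal.coe_le_coe_iff, hMeq]
        linarith
  · -- s = 0
    subst hs
    by_cases hξ : ξ = 0
    · rw [if_pos (Or.inr ⟨rfl, hξ⟩)]
      have hAz : A = 0 := by rw [hA, hξ]; simp
      rw [show ((2/q - 1) / (2 - 2/q) * (-(0:ℝ)) *
          ((A * (2 - 2/q) / (-(0:ℝ))) ^ ((1:ℝ)/(2/q - 1))) : ℝ) = 0 by ring, EReal.coe_zero]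
      apply le_antisymm
      · apply iSup_le; intro t; apply iSup_le; intro x
        rcases lt_trichotomy t 0 with h | h | h
        · rw [fneg t h x]; exact bot_le
        · subst h
          by_cases hx : x = 0
          · subst hx; rw [fzero]
          · rw [fzero' x hx]; exact bot_le
        · refine (fposle t h x).trans ?_
          rw [hAz]
          exact EReal.coe_le_coe_iff.2 (by norm_num)
      · exact le_iSup_of_le 0 (le_iSup_of_le 0 fzero.ge)
    · rw [if_neg (by rintro (h | ⟨-, h⟩); exacts [lt_irrefl 0 h, hξ h])]
      apply iSup_top_of_unbdd
      intro M
      have hn : (0:ℝ) < ‖ξ‖ := norm_pos_iff.2 hξ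
      have hApos : 0 < A := by rw [hA]; positivity
      have hbpos : 0 < (|M|+1)/A := div_pos (by positivity) hApos
      set t₀ : ℝ := ((|M|+1)/A) ^ ((1:ℝ)/(2-2/q)) with ht₀
      have ht₀pos : 0 < t₀ := Real.rpow_pos_of_pos hbpos _
      have hval : A * t₀^(2-2/q) = |M|+1 := by
        rw [ht₀, ← Real.rpow_mul hbpos.le,
          show (1/(2-2/q)) * (2-2/q) = (1:ℝ) by rw [one_div, inv_mul_cancel₀ hα0.ne'],
          Real.rpow_one,
          mul_div_cancel₀ _ hApos.ne']
      refine ⟨t₀, le_trans ?_ (le_iSup _ ((1/(2*(C*t₀^(2/q-2)))) • ξ))⟩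
      rw [fposeq t₀ ht₀pos, EReal.coe_le_coe_iff, hval]
      have := le_abs_self M
      linarith
  · -- s > 0
    rw [if_neg (by rintro (h | ⟨h, -⟩) <;> linarith)]
    apply iSup_top_of_unbdd
    intro M
    have ht : 0 < (|M|+1)/s := by positivity
    refine ⟨(|M|+1)/s, le_trans ?_ (le_iSup _ (0 : Euc N))⟩
    rw [fpos _ ht 0, EReal.coe_le_coe_iff]
    simp only [inner_zero_right, norm_zero]
    have h1 : s * ((|M|+1)/s) = |M|+1 := by field_simp
    have := le_abs_self M
    nlinarith [sq_nonneg (0:ℝ)]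

lemma hpe_ident (q : ℝ) (hq1 : 1 < q) (hq2 : q < 2) : (1:ℝ)/(2/q - 1) = q/(2-q) := by
  have hq0 : (0:ℝ) < q := by linarith
  have h1α : (0:ℝ) < 2/q - 1 := by
    have : 1 < 2/q := by rw [lt_div_iff₀ hq0]; linarith
    linarith
  rw [div_eq_div_iff h1α.ne' (by linarith : (2:ℝ)-q ≠ 0)]
  field_simp

lemma main_ident (q : ℝ) (hq1 : 1 < q) (hq2 : q < 2) (n σ : ℝ) (hn : 0 ≤ n) (hσ : 0 < σ) :
    (2/q - 1) / (2 - 2/q) * σ * ((n^2/(4*(1/(2*q)))) * (2 - 2/q) / σ) ^ ((1:ℝ)/(2/q - 1))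
      = (2-q)/2 * (q-1)^(2*(q-1)/(2-q)) * (n^q/σ^(q-1))^(2/(2-q)) := by
  have hq0 : (0:ℝ) < q := by linarith
  have h2q : (0:ℝ) < 2 - q := by linarith
  have hq1' : (0:ℝ) < q - 1 := by linarith
  have hα0 : (0:ℝ) < 2 - 2/q := by
    have : 2/q < 2 := by rw [div_lt_iff₀ hq0]; nlinarith
    linarith
  have hp0 : (0:ℝ) < q/(2-q) := div_pos hq0 h2q
  have hr0 : (0:ℝ) < 2/(2-q) := by positivity
  rw [hpe_ident q hq1 hq2]
  have e0 : n^2/(4*(1/(2*q))) * (2 - 2/q) = n^2*(q-1) := by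
    field_simp
    ring
  have ecoef : (2/q - 1) / (2 - 2/q) = (2-q)/(2*(q-1)) := by
    rw [div_eq_div_iff hα0.ne' (by positivity : (2*(q-1):ℝ) ≠ 0)]
    field_simp
  rw [e0, ecoef]
  rcases hn.eq_or_lt with hn0 | hn0
  · rw [← hn0, show ((0:ℝ)^2*(q-1)/σ) = 0 by norm_num, Real.zero_rpow hp0.ne',
      Real.zero_rpow hq0.ne', zero_div, Real.zero_rpow hr0.ne', mul_zero, mul_zero]
  · have e1 : (n^2*(q-1)/σ) ^ (q/(2-q)) = n^(2*(q/(2-q))) * (q-1)^(q/(2-q)) / σ^(q/(2-q)) := by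
      rw [Real.div_rpow (by positivity) hσ.le, Real.mul_rpow (by positivity) hq1'.le,
        ← Real.rpow_natCast n 2, ← Real.rpow_mul hn]
      norm_num
    have e2 : (n^q/σ^(q-1)) ^ (2/(2-q)) = n^(q*(2/(2-q))) / σ^((q-1)*(2/(2-q))) := by
      rw [Real.div_rpow (Real.rpow_nonneg hn _) (Real.rpow_nonneg hσ.le _),
        ← Real.rpow_mul hn, ← Real.rpow_mul hσ.le]
    rw [e1, e2, show q*(2/(2-q)) = 2*(q/(2-q)) by ring]
    have e3 : (q-1)^(2*(q-1)/(2-q)) = (q-1)^(q/(2-q)) / (q-1) := by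
      rw [show (2*(q-1)/(2-q) : ℝ) = q/(2-q) - 1 by field_simp; ring, Real.rpow_sub hq1',
        Real.rpow_one]
    have e4 : σ^(q/(2-q)) = σ^((q-1)*(2/(2-q))) * σ := by
      rw [show (q/(2-q) : ℝ) = (q-1)*(2/(2-q)) + 1 by field_simp; ring, Real.rpow_add hσ,
        Real.rpow_one]
    rw [e3, e4]
    have hσp : σ^((q-1)*(2/(2-q))) ≠ 0 := (Real.rpow_pos_of_pos hσ _).ne'
    field_simp

/-- **Scaling of the Legendre transform and relation between `F_q^*` and `G_q`.**
For `1 < q < 2`: `((1/(2q))F_q)^*(s,ξ) = ((2-q)/2)(q-1)^{2(q-1)/(2-q)} G_q(s,ξ)^{2/(2-q)}`,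
and for every `C > 0`, `(C F_q)^*(s,ξ) = C^{-q/(2-q)} F_q^*(s,ξ)`. -/
theorem legendre_scaling_and_Gq {N : ℕ} (q : ℝ) (hq1 : 1 < q) (hq2 : q < 2) :
    (∀ (s : ℝ) (ξ : Euc N),
      legendre (fun t x => ((1 / (2 * q) : ℝ) : EReal) * Fq q t x) s ξ =
        (((2 - q) / 2 * (q - 1) ^ (2 * (q - 1) / (2 - q)) : ℝ) : EReal) *
          ((Gq q s ξ ^ (2 / (2 - q)) : ℝ≥0∞) : EReal)) ∧
    (∀ (C : ℝ), 0 < C → ∀ (s : ℝ) (ξ : Euc N),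
      legendre (fun t x => ((C : ℝ) : EReal) * Fq q t x) s ξ =
        ((C ^ (-(q / (2 - q))) : ℝ) : EReal) * legendre (Fq q) s ξ) := by
  have hq0 : (0:ℝ) < q := by linarith
  have h2q : (0:ℝ) < 2 - q := by linarith
  have hq1' : (0:ℝ) < q - 1 := by linarith
  have hr0 : (0:ℝ) < 2/(2-q) := by positivity
  constructor
  · intro s ξ
    rw [key q hq1 hq2 (1/(2*q)) (by positivity) s ξ]
    by_cases hs : s < 0
    · rw [if_pos (Or.inl hs), Gq, if_pos hs, abs_of_neg hs]
      have hσ : (0:ℝ) < -s := by linarith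
      have hnn : (0:ℝ) ≤ ‖ξ‖^q / (-s)^(q-1) :=
        div_nonneg (Real.rpow_nonneg (norm_nonneg ξ) _) (Real.rpow_nonneg hσ.le _)
      rw [ENNReal.ofReal_rpow_of_nonneg hnn hr0.le, EReal.coe_ennreal_ofReal,
        max_eq_left (Real.rpow_nonneg hnn _), ← EReal.coe_mul, EReal.coe_eq_coe_iff]
      exact main_ident q hq1 hq2 ‖ξ‖ (-s) (norm_nonneg ξ) hσ
    · by_cases hs0 : s = 0 ∧ ξ = 0
      · rw [if_pos (Or.inr hs0), Gq, if_neg hs, if_pos hs0, hs0.1,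
          ENNReal.zero_rpow_of_pos hr0]
        simp
      · rw [if_neg (by rintro (h | h); exacts [hs h, hs0 h]), Gq, if_neg hs, if_neg hs0,
          ENNReal.top_rpow_of_pos hr0, EReal.coe_ennreal_top, EReal.coe_mul_top_of_pos
          (mul_pos (by linarith) (Real.rpow_pos_of_pos hq1' _))]
  · intro C hC s ξ
    have h1 : legendre (Fq q) s ξ = legendre (fun t x => ((1:ℝ) : EReal) * Fq q t x) s ξ := by
      simp only [EReal.coe_one, one_mul]
    rw [h1, key q hq1 hq2 C hC s ξ, key q hq1 hq2 1 one_pos s ξ]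
    have hp : (0:ℝ) < C ^ (-(q/(2-q))) := Real.rpow_pos_of_pos hC _
    by_cases h : s < 0 ∨ (s = 0 ∧ ξ = 0)
    · rw [if_pos h, if_pos h, ← EReal.coe_mul, EReal.coe_eq_coe_iff]
      have hα0 : (0:ℝ) < 2 - 2/q := by
        have : 2/q < 2 := by rw [div_lt_iff₀ hq0]; nlinarith
        linarith
      have hy0 : 0 ≤ ‖ξ‖^2/(4*1) * (2 - 2/q) / (-s) := by
        rcases h with h | ⟨h, -⟩
        · exact div_nonneg (by positivity) (by linarith)
        · rw [h]
          simp
      have e : ‖ξ‖^2/(4*C) * (2 - 2/q) / (-s) = C⁻¹ * (‖ξ‖^2/(4*1) * (2 - 2/q) / (-s)) := by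
        rw [← mul_div_assoc]
        congr 1
        field_simp
      rw [e, Real.mul_rpow (inv_nonneg.2 hC.le) hy0, ← Real.rpow_neg_one C,
        ← Real.rpow_mul hC.le,
        show (-1) * ((1:ℝ)/(2/q - 1)) = -(q/(2-q)) by rw [hpe_ident q hq1 hq2]; ring]
      ring
    · rw [if_neg h, if_neg h, EReal.coe_mul_top_of_pos hp]

end
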